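/- There is no pair (ς, η) with ς ∈ [0,2π), η = (η₁, η₂) ∈ ℝ² with √(η₁² + η₂²) an odd multiple of π/2, such that for all j ∈ {1,2}: −σ_j + (2 η_j η_l / |η|²) σ_l = sin(ς) σ_j + cos(ς) ε_{3jl} σ_l (summation over l ∈ {1,2}). In other words, no anti-rotation T ∈ O(2)∖SO(2) together with S = exp(−i(η₁σ₁ + η₂σ₂)) satisfies the Dirac covariance condition S σ_j* S⁻¹ T_{hj} = σ_h. -/

import Mathlib

open Matrix

noncomputable def pauli : Fin 3 → Matrix (Fin 2) (Fin 2) ℂ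
  | 0 => !![0, 1; 1, 0]
  | 1 => !![0, -Complex.I; Complex.I, 0]
  | 2 => !![1, 0; 0, -1]

/-- The Levi-Civita symbol on `Fin 3`. -/
def leviCivita (i j k : Fin 3) : ℤ :=
  (((i : ℤ) - j) * ((j : ℤ) - k) * ((k : ℤ) - i)) / 2

/-- There is no pair `(ς, η)` with `ς ∈ [0,2π)`, `η = (η₁,η₂) ∈ ℝ²` with
`√(η₁² + η₂²)` an odd multiple of `π/2`, such that for all `j ∈ {1,2}`:
`−σ_j + (2 η_j η_l / |η|²) σ_l = sin(ς) σ_j + cos(ς) ε_{3jl} σ_l`. -/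
theorem no_antirotation_dirac_cov :
    ¬ ∃ (ς η₁ η₂ : ℝ),
        ς ∈ Set.Ico (0 : ℝ) (2 * Real.pi) ∧
        (∃ k : ℕ, Real.sqrt (η₁ ^ 2 + η₂ ^ 2) = (2 * (k : ℝ) + 1) * (Real.pi / 2)) ∧
        (∀ j : Fin 2,
          -(pauli j.castSucc)
            + ∑ l : Fin 2,
                ((2 * (![η₁, η₂] j) * (![η₁, η₂] l) / (η₁ ^ 2 + η₂ ^ 2) : ℝ) : ℂ) •
                  pauli l.castSucc
          = (Real.sin ς : ℂ) • pauli j.castSucc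
            + (Real.cos ς : ℂ) •
                ∑ l : Fin 2, (leviCivita 2 j.castSucc l.castSucc : ℂ) • pauli l.castSucc) := by
  rintro ⟨ς, η₁, η₂, _hς, ⟨k, hk⟩, hall⟩
  have hS : η₁ ^ 2 + η₂ ^ 2 ≠ 0 := by
    intro h
    rw [h, Real.sqrt_zero] at hk
    have hπ := Real.pi_pos
    nlinarith [Nat.cast_nonneg (α := ℝ) k]
  have h0 := hall 0
  have h1 := hall 1
  simp only [Fin.sum_univ_two, pauli, leviCivita, Fin.isValue] at h0 h1
  norm_num at h0 h1
  have e0 := h0.1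
  have e1 := h1.1
  have f0 := h0.2
  have f1 := h1.2
  rw [Complex.ext_iff] at e0 e1 f0 f1
  simp [← Complex.ofReal_ofNat, ← Complex.ofReal_pow, ← Complex.ofReal_mul,
    ← Complex.ofReal_add, ← Complex.ofReal_div, Complex.sin_ofReal_re, Complex.cos_ofReal_re] at e0 e1 f0 f1
  obtain ⟨ea, eb⟩ := e0
  obtain ⟨ec, ed⟩ := e1
  have hpy := Real.sin_sq_add_cos_sq ς
  field_simp at ea eb ec ed
  have hcos : Real.cos ς = 0 := by
    have h2 : Real.cos ς * (η₁ ^ 2 + η₂ ^ 2) = 0 := by linear_combination (ec - eb) / 2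
    exact (mul_eq_zero.mp h2).resolve_right hS
  have hsin : Real.sin ς = 0 := by
    have h2 : Real.sin ς * (η₁ ^ 2 + η₂ ^ 2) = 0 := by linear_combination (ed - ea) / 2
    exact (mul_eq_zero.mp h2).resolve_right hS
  rw [hcos, hsin] at hpy
  norm_num at hpy
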